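/- Let h : E → ℝ ∪ {+∞} be a proper lower semicontinuous convex function with Q ⊆ dom h and let β > 0. Define ψ(x) = h(x) + β d(x). Then the minimization problem min_{x ∈ Q} ψ(x) has a unique solution z* ∈ Q, and for every x ∈ Q one has ψ(x) ≥ ψ(z*) + β ξ(z*, x). -/

import Mathlib

open Set Filter Topology

lemma exists_min_of_lsc_isCompact {α : Type*} [TopologicalSpace α] {K : Set α}
    (hK : IsCompact K) (hne : K.Nonempty) {f : α → ℝ}
    (hf : LowerSemicontinuousOn f K) : ∃ z ∈ K, ∀ u ∈ K, f z ≤ f u := by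
  by_contra hcon
  push_neg at hcon
  choose y hyK hylt using hcon
  have hnb : ∀ x (hx : x ∈ K), ∃ O : Set α, IsOpen O ∧ x ∈ O ∧
      O ∩ K ⊆ {z | f (y x hx) < f z} := by
    intro x hx
    have := hf x hx (f (y x hx)) (hylt x hx)
    rw [eventually_iff, mem_nhdsWithin] at this
    obtain ⟨O, hO, hxO, hsub⟩ := this
    exact ⟨O, hO, hxO, hsub⟩
  choose O hOopen hxO hOsub using hnb
  obtain ⟨t, hcov⟩ := hK.elim_nhds_subcover' (fun x hx => O x hx)
    (fun x hx => (hOopen x hx).mem_nhds (hxO x hx))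
  have htne : t.Nonempty := by
    rcases hne with ⟨x, hx⟩
    rcases mem_iUnion₂.mp (hcov hx) with ⟨b, hb, _⟩
    exact ⟨b, hb⟩
  obtain ⟨a, hat, ha⟩ := t.exists_min_image (fun b => f (y b.1 b.2)) htne
  have hyaK : y a.1 a.2 ∈ K := hyK a.1 a.2
  rcases mem_iUnion₂.mp (hcov hyaK) with ⟨b, hbt, hyb⟩
  have : f (y b.1 b.2) < f (y a.1 a.2) := hOsub b.1 b.2 ⟨hyb, hyaK⟩
  exact absurd (ha b hbt) (not_le.mpr this)

set_option maxHeartbeats 1000000 in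
theorem prox_operation_lemma
    {E : Type*} [NormedAddCommGroup E] [NormedSpace ℝ E] [FiniteDimensional ℝ E]
    (Q : Set E) (hQne : Q.Nonempty) (hQcl : IsClosed Q) (hQcv : Convex ℝ Q)
    (σ : ℝ) (hσ : 0 < σ)
    (d : E → ℝ) (d' : E → E →L[ℝ] ℝ)
    (hd_sc : StrongConvexOn Q σ d)
    (hd_diff : ∀ y ∈ Q, HasFDerivWithinAt d (d' y) Q y)
    (x₀ : E) (hx₀Q : x₀ ∈ Q) (hdx₀ : d x₀ = 0) (hd_nonneg : ∀ u ∈ Q, 0 ≤ d u)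
    (hBreg : ∀ w ∈ Q, ∀ u ∈ Q, σ / 2 * ‖u - w‖ ^ 2 ≤ d u - d w - d' w (u - w))
    (h : E → ℝ) (hh_cv : ConvexOn ℝ Q h) (hh_lsc : LowerSemicontinuousOn h Q)
    (β : ℝ) (hβ : 0 < β) :
    ∃ zs ∈ Q, (∀ u ∈ Q, h zs + β * d zs ≤ h u + β * d u) ∧
      (∀ w ∈ Q, (∀ u ∈ Q, h w + β * d w ≤ h u + β * d u) → w = zs) ∧
      (∀ u ∈ Q, h zs + β * d zs + β * (d u - d zs - d' zs (u - zs)) ≤ h u + β * d u) := by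
  -- ψ is lsc on Q
  have hd_cont : ContinuousOn d Q := fun y hy => (hd_diff y hy).continuousWithinAt
  have hψ_lsc : LowerSemicontinuousOn (fun u => h u + β * d u) Q :=
    hh_lsc.add ((hd_cont.const_smul β).lowerSemicontinuousOn)
  -- the minimum of h on Q ∩ closedBall x₀ 1
  have hK1 : IsCompact (Q ∩ Metric.closedBall x₀ 1) :=
    (isCompact_closedBall x₀ 1).inter_left hQcl
  have hK1ne : (Q ∩ Metric.closedBall x₀ 1).Nonempty :=
    ⟨x₀, hx₀Q, Metric.mem_closedBall_self zero_le_one⟩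
  obtain ⟨v, hvK1, hvmin⟩ := exists_min_of_lsc_isCompact hK1 hK1ne
    (hh_lsc.mono inter_subset_left)
  have hvx₀ : h v ≤ h x₀ := hvmin x₀ ⟨hx₀Q, Metric.mem_closedBall_self zero_le_one⟩
  set C : ℝ := (h x₀ - h v) + β * ‖d' x₀‖ with hCdef
  have hC : 0 ≤ C := by nlinarith [norm_nonneg (d' x₀)]
  set R : ℝ := max 1 (2 * C / (β * σ)) with hRdef
  have hR1 : (1:ℝ) ≤ R := le_max_left _ _
  have hRC : 2 * C / (β * σ) ≤ R := le_max_right _ _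
  -- coercivity: outside the ball of radius R, ψ ≥ ψ x₀
  have hcoer : ∀ u ∈ Q, R < ‖u - x₀‖ → h x₀ ≤ h u + β * d u := by
    intro u hu hdist
    set s : ℝ := ‖u - x₀‖ with hsdef
    have hs1 : 1 < s := lt_of_le_of_lt hR1 hdist
    have hs0 : 0 < s := by linarith
    set t : ℝ := 1 / s with htdef
    have ht0 : 0 < t := by positivity
    have ht1 : t < 1 := by rw [htdef]; rw [div_lt_one hs0]; exact hs1
    -- the intermediate point
    have hconv : (1 - t) • x₀ + t • u ∈ Q := hQcv hx₀Q hu (by linarith) (le_of_lt ht0) (by ring)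
    have hball : (1 - t) • x₀ + t • u ∈ Metric.closedBall x₀ 1 := by
      rw [Metric.mem_closedBall, dist_eq_norm]
      have : (1 - t) • x₀ + t • u - x₀ = t • (u - x₀) := by
        rw [sub_smul, smul_sub, one_smul]; abel
      rw [this, norm_smul, Real.norm_eq_abs, abs_of_pos ht0]
      rw [htdef, one_div, inv_mul_le_iff₀ hs0]; simp [hsdef]
    -- convexity bound on h
    have hhub : h ((1 - t) • x₀ + t • u) ≤ (1 - t) * h x₀ + t * h u :=
      hh_cv.2 hx₀Q hu (by linarith) (le_of_lt ht0) (by ring)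
    have hhlb : h v ≤ h ((1 - t) • x₀ + t • u) := hvmin _ ⟨hconv, hball⟩
    have hhu : h x₀ - (h x₀ - h v) * s ≤ h u := by
      have h1 : h v ≤ (1 - t) * h x₀ + t * h u := le_trans hhlb hhub
      have hts : t * s = 1 := by rw [htdef]; field_simp
      nlinarith [h1, hts]
    -- Bregman bound on d
    have hdu : σ / 2 * s ^ 2 - ‖d' x₀‖ * s ≤ d u := by
      have hb := hBreg x₀ hx₀Q u hu
      rw [hdx₀] at hb
      have hop : |d' x₀ (u - x₀)| ≤ ‖d' x₀‖ * s := by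
        calc |d' x₀ (u - x₀)| = ‖d' x₀ (u - x₀)‖ := rfl
        _ ≤ ‖d' x₀‖ * ‖u - x₀‖ := (d' x₀).le_opNorm _
      have := neg_abs_le (d' x₀ (u - x₀))
      nlinarith
    -- combine
    have hquad : C * s ≤ β * σ / 2 * s ^ 2 := by
      have hsR : 2 * C / (β * σ) ≤ s := le_trans hRC (le_of_lt hdist)
      have hβσ : 0 < β * σ := mul_pos hβ hσ
      rw [div_le_iff₀ hβσ] at hsR
      nlinarith
    nlinarith [hdu, hhu]
  -- existence of a minimizer on the compact piece
  have hR0 : (0:ℝ) ≤ R := le_trans zero_le_one hR1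
  have hKR : IsCompact (Q ∩ Metric.closedBall x₀ R) :=
    (isCompact_closedBall x₀ R).inter_left hQcl
  obtain ⟨zs, hzsKR, hzsmin⟩ := exists_min_of_lsc_isCompact hKR
    ⟨x₀, hx₀Q, Metric.mem_closedBall_self hR0⟩ (hψ_lsc.mono inter_subset_left)
  obtain ⟨hzsQ, -⟩ := hzsKR
  -- zs is a global minimizer
  have hglobal : ∀ u ∈ Q, h zs + β * d zs ≤ h u + β * d u := by
    intro u hu
    by_cases hcase : ‖u - x₀‖ ≤ R
    · exact hzsmin u ⟨hu, by rwa [Metric.mem_closedBall, dist_eq_norm]⟩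
    · have h1 : h zs + β * d zs ≤ h x₀ + β * d x₀ :=
        hzsmin x₀ ⟨hx₀Q, Metric.mem_closedBall_self hR0⟩
      have h2 := hcoer u hu (not_le.mp hcase)
      rw [hdx₀] at h1
      linarith
  -- three-point inequality
  have hkey : ∀ u ∈ Q, h zs + β * d zs + β * (d u - d zs - d' zs (u - zs)) ≤ h u + β * d u := by
    intro u hu
    -- it suffices that h zs - h u ≤ β * d' zs (u - zs)
    have hsuff : h zs - h u ≤ β * d' zs (u - zs) := by
      set c : ℝ → E := fun t => zs + t • (u - zs) with hcdef
      have hc0 : c 0 = zs := by simp [hcdef]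
      have hcQ : ∀ t ∈ Icc (0:ℝ) 1, c t ∈ Q := by
        intro t ht
        have : c t = (1 - t) • zs + t • u := by
          rw [hcdef]; simp only []; rw [sub_smul, smul_sub, one_smul]; abel
        rw [this]
        exact hQcv hzsQ hu (by linarith [ht.2]) ht.1 (by ring)
      have hcderiv : HasDerivWithinAt c (u - zs) (Icc 0 1) 0 := by
        have : HasDerivAt c ((1:ℝ) • (u - zs)) 0 :=
          ((hasDerivAt_id (0:ℝ)).smul_const (u - zs)).const_add zs
        simpa using this.hasDerivWithinAt
      have hcomp : HasDerivWithinAt (fun t => d (c t)) (d' zs (u - zs)) (Icc 0 1) 0 := by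
        have := (hd_diff zs hzsQ).comp_hasDerivWithinAt_of_eq 0 hcderiv
          (fun t ht => hcQ t ht) hc0.symm
        exact this
      have hslope := hasDerivWithinAt_iff_tendsto_slope.mp hcomp
      rw [Icc_diff_left] at hslope
      have hne : (𝓝[Ioc (0:ℝ) 1] 0).NeBot := by
        rw [← mem_closure_iff_nhdsWithin_neBot, closure_Ioc (one_ne_zero).symm]
        exact ⟨le_refl 0, zero_le_one⟩
      have hev : ∀ᶠ t in 𝓝[Ioc (0:ℝ) 1] 0,
          (h zs - h u) / β ≤ slope (fun t => d (c t)) 0 t := by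
        filter_upwards [self_mem_nhdsWithin] with t ht
        obtain ⟨ht0, ht1⟩ := ht
        have hmin := hglobal (c t) (hcQ t ⟨le_of_lt ht0, ht1⟩)
        have hhub : h (c t) ≤ (1 - t) * h zs + t * h u := by
          have : c t = (1 - t) • zs + t • u := by
            rw [hcdef]; simp only []; rw [sub_smul, smul_sub, one_smul]; abel
          rw [this]
          exact hh_cv.2 hzsQ hu (by linarith) (le_of_lt ht0) (by ring)
        rw [slope_def_field, hc0, sub_zero t, div_le_div_iff₀ hβ ht0]
        nlinarith [hmin, hhub]
      have hlim : (h zs - h u) / β ≤ d' zs (u - zs) := ge_of_tendsto hslope hev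
      rw [div_le_iff₀ hβ] at hlim
      linarith
    linarith
  refine ⟨zs, hzsQ, hglobal, ?_, hkey⟩
  -- uniqueness
  intro w hwQ hwmin
  have h1 := hkey w hwQ
  have h2 := hwmin zs hzsQ
  have h3 := hBreg zs hzsQ w hwQ
  have hξ : d w - d zs - d' zs (w - zs) ≤ 0 := by nlinarith
  have hnorm : ‖w - zs‖ ^ 2 ≤ 0 := by nlinarith
  have h4 : ‖w - zs‖ ^ 2 = 0 := le_antisymm hnorm (sq_nonneg _)
  have h5 : ‖w - zs‖ = 0 := by
    exact pow_eq_zero_iff two_ne_zero |>.mp h4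
  rw [norm_sub_eq_zero_iff] at h5
  exact h5
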